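/- Let E and F be finite-dimensional real normed vector spaces with F of real dimension 2, U ⊆ E and V ⊆ F open sets, J an almost complex structure on U and J' an almost complex structure on V. Let π : U → V be a smooth pseudoholomorphic map (Dπ(x) ∘ J(x) = J'(π(x)) ∘ Dπ(x) for all x), and let X, Y be smooth vector fields on U admitting smooth π-related vector fields X', Y' on V (Dπ(x)(X(x)) = X'(π(x)) and Dπ(x)(Y(x)) = Y'(π(x)) for all x). Then Dπ(x)(N_J(X,Y)(x)) = 0 for all x ∈ U, i.e. the values of the Nijenhuis tensor of J lie in the kernels of Dπ (the image of N_J is tangent to the fibers of π). -/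

import Mathlib

/-- The Lie bracket of two vector fields on a normed space,
`[X,Y](x) = DY(x)(X(x)) - DX(x)(Y(x))`. -/
noncomputable def lieB {G : Type*} [NormedAddCommGroup G] [NormedSpace ℝ G]
    (X Y : G → G) : G → G :=
  fun p => fderiv ℝ Y p (X p) - fderiv ℝ X p (Y p)

/-- The Nijenhuis tensor `N_J(X,Y) = [JX,JY] - J[JX,Y] - J[X,JY] - [X,Y]`. -/
noncomputable def nijenhuis {G : Type*} [NormedAddCommGroup G] [NormedSpace ℝ G]
    (J : G → G →L[ℝ] G) (X Y : G → G) : G → G :=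
  fun p =>
    lieB (fun q => J q (X q)) (fun q => J q (Y q)) p
      - J p (lieB (fun q => J q (X q)) Y p)
      - J p (lieB X (fun q => J q (Y q)) p)
      - lieB X Y p

/-- The purely algebraic form of the Nijenhuis tensor vanishes in (real) dimension 2. -/
lemma nij_alg_zero {F : Type*} [NormedAddCommGroup F] [NormedSpace ℝ F]
    [FiniteDimensional ℝ F] (hF2 : Module.finrank ℝ F = 2)
    (Jm : F →L[ℝ] F) (DJ : F →L[ℝ] F →L[ℝ] F)
    (hJJ : ∀ z, Jm (Jm z) = -z) (u v : F) :
    DJ (Jm u) v - DJ (Jm v) u - DJ v (Jm u) + DJ u (Jm v) = 0 := by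
  rcases eq_or_ne u 0 with rfl | hu
  · simp
  -- `u` and `Jm u` are linearly independent, hence span `F`.
  have hli : LinearIndependent ℝ ![u, Jm u] := by
    refine (LinearIndependent.pair_iff' hu).2 fun a ha => ?_
    have h1 : a • Jm u = -u := by rw [← map_smul, ha, hJJ]
    have h2 : (a * a + 1) • u = 0 := by
      rw [add_smul, one_smul, mul_smul, ha, h1, neg_add_cancel]
    have : a * a + 1 = 0 := by
      by_contra h
      exact hu (by simpa [h] using (smul_eq_zero.1 h2))
    nlinarith [sq_nonneg a]
  have hspan : Submodule.span ℝ (Set.range ![u, Jm u]) = ⊤ :=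
    hli.span_eq_top_of_card_eq_finrank (by simp [hF2])
  have hv : v ∈ Submodule.span ℝ ({u, Jm u} : Set F) := by
    have hr : Set.range ![u, Jm u] = {u, Jm u} := by
      ext z; simp [Fin.exists_fin_two]; tauto
    rw [← hr, hspan]; trivial
  obtain ⟨a, b, hab⟩ := Submodule.mem_span_pair.1 hv
  subst hab
  simp only [map_add, map_smul, ContinuousLinearMap.add_apply, ContinuousLinearMap.smul_apply,
    ContinuousLinearMap.map_add, ContinuousLinearMap.map_smul, hJJ, map_neg,
    ContinuousLinearMap.neg_apply, ContinuousLinearMap.map_neg, smul_neg]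
  module

/-- The Nijenhuis tensor of an almost complex structure on an open subset of a
2-dimensional real vector space vanishes. -/
lemma nijenhuis_zero_of_finrank_two {F : Type*} [NormedAddCommGroup F] [NormedSpace ℝ F]
    [FiniteDimensional ℝ F] (hF2 : Module.finrank ℝ F = 2)
    {V : Set F} {J : F → F →L[ℝ] F}
    (hJs : ContDiffOn ℝ (⊤ : ℕ∞) J V)
    (hJ2 : ∀ y ∈ V, (J y).comp (J y) = -ContinuousLinearMap.id ℝ F)
    {X Y : F → F} (hX : ContDiffOn ℝ (⊤ : ℕ∞) X V) (hY : ContDiffOn ℝ (⊤ : ℕ∞) Y V)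
    {y : F} (hy : V ∈ nhds y) :
    nijenhuis J X Y y = 0 := by
  have hyV : y ∈ V := mem_of_mem_nhds hy
  have hJd : DifferentiableAt ℝ J y := (hJs.contDiffAt hy).differentiableAt (by simp)
  have hXd : DifferentiableAt ℝ X y := (hX.contDiffAt hy).differentiableAt (by simp)
  have hYd : DifferentiableAt ℝ Y y := (hY.contDiffAt hy).differentiableAt (by simp)
  have hJJ : ∀ z, J y (J y z) = -z := by
    intro z
    have h := congrArg (fun L : F →L[ℝ] F => L z) (hJ2 y hyV)
    simpa using h
  -- differentiating `J q (J q z) = -z` on `V`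
  have key : ∀ w z, J y (fderiv ℝ J y w z) = -(fderiv ℝ J y w (J y z)) := by
    intro w z
    have hJz : DifferentiableAt ℝ (fun q => J q z) y := hJd.clm_apply (differentiableAt_const z)
    have hfz : fderiv ℝ (fun q => J q z) y = (fderiv ℝ J y).flip z := by
      rw [fderiv_clm_apply hJd (differentiableAt_const z)]
      simp
    have hg : (fun q => J q (J q z)) =ᶠ[nhds y] fun _ => -z := by
      filter_upwards [hy] with q hq
      have h := congrArg (fun L : F →L[ℝ] F => L z) (hJ2 q hq)
      simpa using h
    have h0 : fderiv ℝ (fun q => J q (J q z)) y = 0 := by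
      rw [hg.fderiv_eq]; exact fderiv_const_apply _
    rw [fderiv_clm_apply hJd hJz, hfz] at h0
    have h1 := congrArg (fun L : F →L[ℝ] F => L w) h0
    simp only [ContinuousLinearMap.add_apply, ContinuousLinearMap.coe_comp',
      Function.comp_apply, ContinuousLinearMap.flip_apply, ContinuousLinearMap.zero_apply] at h1
    linear_combination (norm := abel) h1
  have hJX : fderiv ℝ (fun q => J q (X q)) y
      = (J y).comp (fderiv ℝ X y) + (fderiv ℝ J y).flip (X y) :=
    fderiv_clm_apply hJd hXd
  have hJY : fderiv ℝ (fun q => J q (Y q)) y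
      = (J y).comp (fderiv ℝ Y y) + (fderiv ℝ J y).flip (Y y) :=
    fderiv_clm_apply hJd hYd
  have expand : nijenhuis J X Y y
      = fderiv ℝ J y (J y (X y)) (Y y) - fderiv ℝ J y (J y (Y y)) (X y)
        - fderiv ℝ J y (Y y) (J y (X y)) + fderiv ℝ J y (X y) (J y (Y y)) := by
    simp only [nijenhuis, lieB, hJX, hJY, ContinuousLinearMap.add_apply,
      ContinuousLinearMap.coe_comp', Function.comp_apply, ContinuousLinearMap.flip_apply,
      map_sub, map_add, hJJ, key, map_neg, neg_neg]
    abel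
  rw [expand]
  exact nij_alg_zero hF2 (J y) (fderiv ℝ J y) hJJ (X y) (Y y)

/-- π-related vector fields have π-related Lie brackets. -/
lemma rel_lieB {E F : Type*} [NormedAddCommGroup E] [NormedSpace ℝ E]
    [NormedAddCommGroup F] [NormedSpace ℝ F]
    {U : Set E} {V : Set F} (hU : IsOpen U) (hV : IsOpen V)
    {pr : E → F} (hprs : ContDiffOn ℝ (⊤ : ℕ∞) pr U) (hprV : Set.MapsTo pr U V)
    {X Y : E → E} (hX : ContDiffOn ℝ (⊤ : ℕ∞) X U) (hY : ContDiffOn ℝ (⊤ : ℕ∞) Y U)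
    {X' Y' : F → F} (hX' : ContDiffOn ℝ (⊤ : ℕ∞) X' V) (hY' : ContDiffOn ℝ (⊤ : ℕ∞) Y' V)
    (hXrel : ∀ x ∈ U, fderiv ℝ pr x (X x) = X' (pr x))
    (hYrel : ∀ x ∈ U, fderiv ℝ pr x (Y x) = Y' (pr x))
    {x : E} (hx : x ∈ U) :
    fderiv ℝ pr x (lieB X Y x) = lieB X' Y' (pr x) := by
  have hmem : U ∈ nhds x := hU.mem_nhds hx
  have hmemV : V ∈ nhds (pr x) := hV.mem_nhds (hprV hx)
  have hprC : ContDiffAt ℝ (⊤ : ℕ∞) pr x := hprs.contDiffAt hmem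
  have hprd : DifferentiableAt ℝ pr x := hprC.differentiableAt (by simp)
  have hPc : ContDiffAt ℝ (⊤ : ℕ∞) (fderiv ℝ pr) x := hprC.fderiv_right (by simp)
  have hPd : DifferentiableAt ℝ (fderiv ℝ pr) x := hPc.differentiableAt (by simp)
  have hsymm : IsSymmSndFDerivAt ℝ pr x :=
    hprC.isSymmSndFDerivAt (by simp only [minSmoothness_of_isRCLikeNormedField]; exact WithTop.coe_le_coe.2 (le_top : (2 : ℕ∞) ≤ ⊤))
  have key : ∀ (Z : E → E) (Z' : F → F), ContDiffOn ℝ (⊤ : ℕ∞) Z U →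
      ContDiffOn ℝ (⊤ : ℕ∞) Z' V → (∀ z ∈ U, fderiv ℝ pr z (Z z) = Z' (pr z)) → ∀ w : E,
      fderiv ℝ pr x (fderiv ℝ Z x w) + fderiv ℝ (fderiv ℝ pr) x w (Z x)
        = fderiv ℝ Z' (pr x) (fderiv ℝ pr x w) := by
    intro Z Z' hZ hZ' hrel w
    have hZd : DifferentiableAt ℝ Z x := (hZ.contDiffAt hmem).differentiableAt (by simp)
    have hZ'd : DifferentiableAt ℝ Z' (pr x) := (hZ'.contDiffAt hmemV).differentiableAt (by simp)
    have heq : (fun z => fderiv ℝ pr z (Z z)) =ᶠ[nhds x] (Z' ∘ pr) := by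
      filter_upwards [hmem] with z hz using hrel z hz
    have h1 : fderiv ℝ (fun z => fderiv ℝ pr z (Z z)) x
        = (fderiv ℝ pr x).comp (fderiv ℝ Z x) + (fderiv ℝ (fderiv ℝ pr) x).flip (Z x) :=
      fderiv_clm_apply hPd hZd
    have h2 : fderiv ℝ (Z' ∘ pr) x = (fderiv ℝ Z' (pr x)).comp (fderiv ℝ pr x) :=
      (hZ'd.hasFDerivAt.comp x hprd.hasFDerivAt).fderiv
    have h3 := heq.fderiv_eq (𝕜 := ℝ)
    rw [h1, h2] at h3
    have h4 := congrArg (fun L : E →L[ℝ] F => L w) h3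
    simpa using h4
  have hXw := key X X' hX hX' hXrel (Y x)
  have hYw := key Y Y' hY hY' hYrel (X x)
  rw [hXrel x hx] at hYw
  rw [hYrel x hx] at hXw
  simp only [lieB, map_sub]
  rw [← hYw, ← hXw, hsymm.eq (X x) (Y x)]
  abel

/-- If the target has real dimension 2, the Nijenhuis tensor of `J` takes values
in the kernels of `Dπ` for a pseudoholomorphic map `π` (tangency to the fibers). -/
theorem nijenhuis_image_in_fibers
    {E F : Type*} [NormedAddCommGroup E] [NormedSpace ℝ E] [FiniteDimensional ℝ E]
    [NormedAddCommGroup F] [NormedSpace ℝ F] [FiniteDimensional ℝ F]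
    (hF2 : Module.finrank ℝ F = 2)
    (U : Set E) (V : Set F) (hU : IsOpen U) (hV : IsOpen V)
    (J : E → E →L[ℝ] E) (J' : F → F →L[ℝ] F)
    (hJs : ContDiffOn ℝ (⊤ : ℕ∞) J U)
    (hJ2 : ∀ x ∈ U, (J x).comp (J x) = -ContinuousLinearMap.id ℝ E)
    (hJ's : ContDiffOn ℝ (⊤ : ℕ∞) J' V)
    (hJ'2 : ∀ y ∈ V, (J' y).comp (J' y) = -ContinuousLinearMap.id ℝ F)
    (pr : E → F) (hprs : ContDiffOn ℝ (⊤ : ℕ∞) pr U) (hprV : Set.MapsTo pr U V)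
    (hprPH : ∀ x ∈ U, (fderiv ℝ pr x).comp (J x) = (J' (pr x)).comp (fderiv ℝ pr x))
    (X Y : E → E) (hX : ContDiffOn ℝ (⊤ : ℕ∞) X U) (hY : ContDiffOn ℝ (⊤ : ℕ∞) Y U)
    (X' Y' : F → F) (hX' : ContDiffOn ℝ (⊤ : ℕ∞) X' V) (hY' : ContDiffOn ℝ (⊤ : ℕ∞) Y' V)
    (hXrel : ∀ x ∈ U, fderiv ℝ pr x (X x) = X' (pr x))
    (hYrel : ∀ x ∈ U, fderiv ℝ pr x (Y x) = Y' (pr x)) :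
    ∀ x ∈ U, fderiv ℝ pr x (nijenhuis J X Y x) = 0 := by
  intro x hx
  have hyV : pr x ∈ V := hprV hx
  have hmemV : V ∈ nhds (pr x) := hV.mem_nhds hyV
  have hPH : ∀ z ∈ U, ∀ w, fderiv ℝ pr z (J z w) = J' (pr z) (fderiv ℝ pr z w) := by
    intro z hz w
    have h := congrArg (fun L : E →L[ℝ] F => L w) (hprPH z hz)
    simpa using h
  have hJX : ContDiffOn ℝ (⊤ : ℕ∞) (fun q => J q (X q)) U := hJs.clm_apply hX
  have hJY : ContDiffOn ℝ (⊤ : ℕ∞) (fun q => J q (Y q)) U := hJs.clm_apply hY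
  have hJ'X' : ContDiffOn ℝ (⊤ : ℕ∞) (fun q => J' q (X' q)) V := hJ's.clm_apply hX'
  have hJ'Y' : ContDiffOn ℝ (⊤ : ℕ∞) (fun q => J' q (Y' q)) V := hJ's.clm_apply hY'
  have hJXrel : ∀ z ∈ U, fderiv ℝ pr z (J z (X z)) = (fun q => J' q (X' q)) (pr z) := by
    intro z hz; simp only; rw [hPH z hz (X z), hXrel z hz]
  have hJYrel : ∀ z ∈ U, fderiv ℝ pr z (J z (Y z)) = (fun q => J' q (Y' q)) (pr z) := by
    intro z hz; simp only; rw [hPH z hz (Y z), hYrel z hz]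
  have h1 := rel_lieB hU hV hprs hprV hJX hJY hJ'X' hJ'Y' hJXrel hJYrel hx
  have h2 := rel_lieB hU hV hprs hprV hJX hY hJ'X' hY' hJXrel hYrel hx
  have h3 := rel_lieB hU hV hprs hprV hX hJY hX' hJ'Y' hXrel hJYrel hx
  have h4 := rel_lieB hU hV hprs hprV hX hY hX' hY' hXrel hYrel hx
  have hmain : fderiv ℝ pr x (nijenhuis J X Y x) = nijenhuis J' X' Y' (pr x) := by
    simp only [nijenhuis, map_sub, hPH x hx, h1, h2, h3, h4]
  rw [hmain]
  exact nijenhuis_zero_of_finrank_two hF2 hJ's hJ'2 hX' hY' hmemV
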